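/- For δ₀ > 1 and c ∈ [-1,1], the expression (c+1)(1-δ₀)(c - f₋(δ₀))(c - f₊(δ₀)) is nonnegative, where f₋ < -1 and f₊ > 3 are the two roots defined by f±(δ₀) = (1 - 6δ₀ + 8δ₀² - 8δ₀³ + 4δ₀⁴ ± √(1 - 8δ₀ + 16δ₀² - 48δ₀³ + 120δ₀⁴ - 160δ₀⁵ + 128δ₀⁶ - 64δ₀⁷ + 16δ₀⁸))/(2(δ₀-1)). -/

import Mathlib

noncomputable def fPlusP (δ₀ : ℝ) : ℝ :=
  (1 - 6 * δ₀ + 8 * δ₀ ^ 2 - 8 * δ₀ ^ 3 + 4 * δ₀ ^ 4 +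
    Real.sqrt (1 - 8 * δ₀ + 16 * δ₀ ^ 2 - 48 * δ₀ ^ 3 + 120 * δ₀ ^ 4
      - 160 * δ₀ ^ 5 + 128 * δ₀ ^ 6 - 64 * δ₀ ^ 7 + 16 * δ₀ ^ 8)) /
  (2 * (δ₀ - 1))

noncomputable def fMinusP (δ₀ : ℝ) : ℝ :=
  (1 - 6 * δ₀ + 8 * δ₀ ^ 2 - 8 * δ₀ ^ 3 + 4 * δ₀ ^ 4 -
    Real.sqrt (1 - 8 * δ₀ + 16 * δ₀ ^ 2 - 48 * δ₀ ^ 3 + 120 * δ₀ ^ 4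
      - 160 * δ₀ ^ 5 + 128 * δ₀ ^ 6 - 64 * δ₀ ^ 7 + 16 * δ₀ ^ 8)) /
  (2 * (δ₀ - 1))

theorem stmt_9 (δ₀ c : ℝ) (hδ : 1 < δ₀) (hc : c ∈ Set.Icc (-1 : ℝ) 1) :
    0 ≤ (c + 1) * (1 - δ₀) * (c - fMinusP δ₀) * (c - fPlusP δ₀) := by
  obtain ⟨hc1, hc2⟩ := hc
  have hd0 : (0:ℝ) < δ₀ := lt_trans one_pos hδ
  have hd1 : (0:ℝ) < δ₀ - 1 := sub_pos.2 hδ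
  have hdne : δ₀ - 1 ≠ 0 := ne_of_gt hd1
  set D : ℝ := 1 - 8 * δ₀ + 16 * δ₀ ^ 2 - 48 * δ₀ ^ 3 + 120 * δ₀ ^ 4
      - 160 * δ₀ ^ 5 + 128 * δ₀ ^ 6 - 64 * δ₀ ^ 7 + 16 * δ₀ ^ 8 with hDdef
  have hD : 0 ≤ D := by
    have h1 : 0 < (δ₀ - 1) * δ₀ * (4 * δ₀ * ((δ₀ - 1)^2 + 1) - 1) := by
      apply mul_pos (mul_pos hd1 hd0)
      nlinarith [sq_nonneg (δ₀ - 1)]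
    nlinarith [sq_nonneg (1 - 6 * δ₀ + 8 * δ₀ ^ 2 - 8 * δ₀ ^ 3 + 4 * δ₀ ^ 4)]
  have hs2 : Real.sqrt D ^ 2 = D := Real.sq_sqrt hD
  set N : ℝ := 1 - 6 * δ₀ + 8 * δ₀ ^ 2 - 8 * δ₀ ^ 3 + 4 * δ₀ ^ 4 with hNdef
  set C : ℝ := δ₀ - 8 * δ₀ ^ 2 + 8 * δ₀ ^ 3 - 4 * δ₀ ^ 4 with hCdef
  have key : (c - fMinusP δ₀) * (c - fPlusP δ₀)
      = ((δ₀ - 1) * c ^ 2 - N * c + C) / (δ₀ - 1) := by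
    unfold fMinusP fPlusP
    rw [← hDdef, ← hNdef]
    field_simp
    linear_combination (-1) * hs2
  have hq : (δ₀ - 1) * c ^ 2 - N * c + C ≤ 0 := by
    nlinarith [mul_nonneg (sub_nonneg.2 hc2) (by linarith : (0:ℝ) ≤ c + 1),
      sq_nonneg (2 * δ₀ ^ 2 - 2 * δ₀ + 1), mul_pos hd1 hd0,
      mul_nonneg (mul_nonneg (sub_nonneg.2 hc2) (by linarith : (0:ℝ) ≤ c + 1)) hd1.le]
  have h2 : 0 ≤ (1 - δ₀) * ((c - fMinusP δ₀) * (c - fPlusP δ₀)) := by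
    rw [key]
    rw [mul_div_assoc']
    apply div_nonneg _ hd1.le
    nlinarith [hq]
  calc (0:ℝ) ≤ (c + 1) * ((1 - δ₀) * ((c - fMinusP δ₀) * (c - fPlusP δ₀))) :=
        mul_nonneg (by linarith) h2
    _ = (c + 1) * (1 - δ₀) * (c - fMinusP δ₀) * (c - fPlusP δ₀) := by ring
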